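/- In the t-BMW algebra K_{n+1}, one has g_n f_{n-1} h_n = g_n e_n f_{n-1} h_n = g_{n-1}^{-1} e_{n-1} h_n. -/
import Mathlib


/-- In the t-BMW algebra `K_{n+1}`, one has
`g_n f_{n-1} h_n = g_n e_n f_{n-1} h_n = g_{n-1}⁻¹ e_{n-1} h_n`. -/
theorem tBMW_reductions2_v {A : Type*} [Ring A]
    (gm gmInv gn hm hn em en fm : A)
    (hgmi : gm * gmInv = 1) (higm : gmInv * gm = 1)
    -- f_{n-1} h_n = e_n h_{n-1} h_n
    (hfh : fm * hn = en * hm * hn)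
    (heg : en * gn = gn * en)
    -- g_n h_{n-1} h_n = g_{n-1}⁻¹ h_n
    (hghh : gn * hm * hn = gmInv * hn)
    (henh : en * hn = hn) (hhen : hn * en = hn)
    -- e_n g_{n-1}⁻¹ e_n = g_{n-1}⁻¹ e_{n-1} e_n   (from (5.17))
    (hege : en * gmInv * en = gmInv * em * en)
    (hee : en * en = en) :
    gn * fm * hn = gmInv * em * hn ∧ gn * en * fm * hn = gmInv * em * hn := by
  have key : gn * (en * (hm * hn)) = gmInv * em * hn := by
    calc gn * (en * (hm * hn)) = en * gn * (hm * hn) := by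
          rw [← mul_assoc, ← heg]
      _ = en * (gn * hm * hn) := by noncomm_ring
      _ = en * (gmInv * hn) := by rw [hghh]
      _ = en * (gmInv * (en * hn)) := by rw [henh]
      _ = en * gmInv * en * hn := by noncomm_ring
      _ = gmInv * em * en * hn := by rw [hege]
      _ = gmInv * em * (en * hn) := by noncomm_ring
      _ = gmInv * em * hn := by rw [henh]
  have h1 : gn * fm * hn = gmInv * em * hn := by
    calc gn * fm * hn = gn * (fm * hn) := by noncomm_ring
      _ = gn * (en * hm * hn) := by rw [hfh]
      _ = gn * (en * (hm * hn)) := by noncomm_ring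
      _ = gmInv * em * hn := key
  refine ⟨h1, ?_⟩
  calc gn * en * fm * hn = gn * (en * (fm * hn)) := by noncomm_ring
    _ = gn * (en * (en * hm * hn)) := by rw [hfh]
    _ = gn * (en * en * (hm * hn)) := by noncomm_ring
    _ = gn * (en * (hm * hn)) := by rw [hee]
    _ = gmInv * em * hn := key
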